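/- Let ρ, T > 0 and suppose g : [0,T] → ℝ is differentiable with g'(t) = 3ρ g(t) + ρη for a constant η and g(T) = 0, and f : [0,T] → ℝ is differentiable with f'(t) = 3ρ f(t) + 2ρ(η + 2e^{-ρt}x) and f(T) = -(η + 2e^{-ρT}x)/2, for constants η, x. Then g(t) = ((e^{-3ρ(T-t)} - 1)/3)η and f(t) = ((e^{-3ρ(T-t)} - 4)/6)η - e^{-ρt}x for all t ∈ [0,T]. Moreover, if additionally g(0) - f(0) = x, then η = 0 and hence g ≡ 0. -/

import Mathlib

open Real

-- uniqueness for h' = c h, h T = 0 on [0,T]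
lemma lin_ode_zero (c T : ℝ) (hT : 0 < T) (h : ℝ → ℝ)
    (hh : ∀ t ∈ Set.Icc (0:ℝ) T, HasDerivWithinAt h (c * h t) (Set.Icc (0:ℝ) T) t)
    (hT0 : h T = 0) : ∀ t ∈ Set.Icc (0:ℝ) T, h t = 0 := by
  set ψ : ℝ → ℝ := fun t => Real.exp (-c*t) * h t with hψ
  have hderiv : ∀ t ∈ Set.Icc (0:ℝ) T, HasDerivWithinAt ψ 0 (Set.Icc (0:ℝ) T) t := by
    intro t ht
    have he : HasDerivAt (fun s => Real.exp (-c*s)) (Real.exp (-c*t) * (-c)) t := by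
      have := ((hasDerivAt_id t).const_mul (-c)).exp
      simpa using this
    have := he.hasDerivWithinAt.mul (hh t ht)
    refine this.congr_deriv ?_
    ring
  have hconst : ∀ t ∈ Set.Icc (0:ℝ) T, ψ t = ψ 0 := by
    apply constant_of_derivWithin_zero
    · intro t ht
      exact (hderiv t ht).differentiableWithinAt
    · intro t ht
      have := (hderiv t (Set.Ico_subset_Icc_self ht)).derivWithin
        ((uniqueDiffOn_Icc hT) t (Set.Ico_subset_Icc_self ht))
      exact this
  have hψT : ψ T = 0 := by simp [hψ, hT0]
  have hψ0 : ψ 0 = 0 := by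
    have := hconst T (Set.right_mem_Icc.mpr hT.le)
    rw [hψT] at this; exact this.symm
  intro t ht
  have h1 : ψ t = 0 := by rw [hconst t ht, hψ0]
  have : Real.exp (-c*t) * h t = 0 := h1
  have hne : Real.exp (-c*t) ≠ 0 := Real.exp_ne_zero _
  exact (mul_eq_zero.mp this).resolve_left hne

theorem ode_solutions_force_eta_zero (ρ T η x : ℝ)
    (hρ : 0 < ρ) (hT : 0 < T)
    (f g : ℝ → ℝ)
    (hg : ∀ t ∈ Set.Icc (0:ℝ) T,
      HasDerivWithinAt g (3*ρ*g t + ρ*η) (Set.Icc (0:ℝ) T) t)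
    (hgT : g T = 0)
    (hf : ∀ t ∈ Set.Icc (0:ℝ) T,
      HasDerivWithinAt f (3*ρ*f t + 2*ρ*(η + 2*Real.exp (-ρ*t)*x)) (Set.Icc (0:ℝ) T) t)
    (hfT : f T = -(η + 2*Real.exp (-ρ*T)*x)/2) :
    (∀ t ∈ Set.Icc (0:ℝ) T,
      g t = ((Real.exp (-3*ρ*(T-t)) - 1)/3)*η ∧
      f t = ((Real.exp (-3*ρ*(T-t)) - 4)/6)*η - Real.exp (-ρ*t)*x) ∧
    (g 0 - f 0 = x → η = 0 ∧ ∀ t ∈ Set.Icc (0:ℝ) T, g t = 0) := by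
  set G : ℝ → ℝ := fun t => ((Real.exp (-3*ρ*(T-t)) - 1)/3)*η with hGdef
  set F : ℝ → ℝ := fun t => ((Real.exp (-3*ρ*(T-t)) - 4)/6)*η - Real.exp (-ρ*t)*x with hFdef
  have hGder : ∀ t : ℝ, HasDerivAt G (ρ*η*Real.exp (-3*ρ*(T-t))) t := by
    intro t
    have h1 : HasDerivAt (fun s => -3*ρ*(T-s)) (3*ρ) t := by
      have := ((hasDerivAt_id t).const_sub T).const_mul (-3*ρ)
      refine this.congr_deriv ?_; ring
    have := (((h1.exp).sub_const 1).div_const 3).mul_const η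
    refine this.congr_deriv ?_
    ring
  have hFder : ∀ t : ℝ, HasDerivAt F
      (ρ*η*Real.exp (-3*ρ*(T-t))/2 + ρ*Real.exp (-ρ*t)*x) t := by
    intro t
    have h1 : HasDerivAt (fun s => -3*ρ*(T-s)) (3*ρ) t := by
      have := ((hasDerivAt_id t).const_sub T).const_mul (-3*ρ)
      refine this.congr_deriv ?_; ring
    have h2 : HasDerivAt (fun s => Real.exp (-ρ*s)) (Real.exp (-ρ*t) * (-ρ)) t := by
      have := ((hasDerivAt_id t).const_mul (-ρ)).exp
      simpa using this
    have := ((((h1.exp).sub_const 4).div_const 6).mul_const η).sub (h2.mul_const x)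
    refine this.congr_deriv ?_
    ring
  -- g - G is zero
  have hgG : ∀ t ∈ Set.Icc (0:ℝ) T, g t - G t = 0 := by
    apply lin_ode_zero (3*ρ) T hT
    · intro t ht
      have := (hg t ht).sub ((hGder t).hasDerivWithinAt)
      refine this.congr_deriv ?_
      simp only [hGdef]
      ring
    · simp [hGdef, hgT]
  have hfF : ∀ t ∈ Set.Icc (0:ℝ) T, f t - F t = 0 := by
    apply lin_ode_zero (3*ρ) T hT
    · intro t ht
      have := (hf t ht).sub ((hFder t).hasDerivWithinAt)
      refine this.congr_deriv ?_
      simp only [hFdef]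
      ring
    · simp only [hFdef, hfT]
      simp
      ring
  have hmain : ∀ t ∈ Set.Icc (0:ℝ) T,
      g t = ((Real.exp (-3*ρ*(T-t)) - 1)/3)*η ∧
      f t = ((Real.exp (-3*ρ*(T-t)) - 4)/6)*η - Real.exp (-ρ*t)*x := by
    intro t ht
    constructor
    · have := hgG t ht
      simp only [hGdef] at this
      linarith
    · have := hfF t ht
      simp only [hFdef] at this
      linarith
  refine ⟨hmain, ?_⟩
  intro hx
  have h0 : (0:ℝ) ∈ Set.Icc (0:ℝ) T := Set.left_mem_Icc.mpr hT.le
  obtain ⟨hg0, hf0⟩ := hmain 0 h0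
  rw [hg0, hf0] at hx
  have hexp : Real.exp (-ρ*0) = 1 := by norm_num
  rw [hexp] at hx
  have hkey : (Real.exp (-3*ρ*(T-0)) + 2) * η = 0 := by linarith
  have hpos : Real.exp (-3*ρ*(T-0)) + 2 > 0 := by positivity
  have hη : η = 0 := by
    rcases mul_eq_zero.mp hkey with h | h
    · linarith
    · exact h
  refine ⟨hη, ?_⟩
  intro t ht
  rw [(hmain t ht).1, hη, mul_zero]
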